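/- Let A be a unital C*-algebra, let h ∈ A be self-adjoint (h* = h), and let λ be a real number with ‖h‖ ≤ λ ≤ 1. Set u := exp(i·h), the exponential of i·h in the Banach algebra A. Then for all x, y ∈ A with ‖x‖ ≤ 1 and ‖y‖ ≤ 1 one has ‖ u x u* y − ( x y + i·(h x y − x h y) ) ‖ ≤ 4λ². -/

import Mathlib

open NormedSpace Nat
set_option maxHeartbeats 1000000

lemma two_pow_le_fact (n : ℕ) : (2:ℕ)^(n+1) ≤ (n+2)! := by
  induction n with
  | zero => norm_num [Nat.factorial]
  | succ n ih =>
    calc (2:ℕ)^(n+2) = 2 * 2^(n+1) := by ring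
    _ ≤ (n+3) * (n+2)! := Nat.mul_le_mul (by omega) ih
    _ = (n+3)! := rfl

lemma exp_taylor_two {A : Type*} [NormedRing A] [NormedAlgebra ℂ A] [CompleteSpace A]
    (a : A) (ha : ‖a‖ ≤ 1) : ‖exp a - 1 - a‖ ≤ ‖a‖ ^ 2 := by
  have hs : Summable fun n : ℕ => ((n !:ℂ))⁻¹ • a ^ n := expSeries_summable' a
  have hsn : Summable fun n : ℕ => ‖((n !:ℂ))⁻¹ • a ^ n‖ := norm_expSeries_summable' a
  have hsplit := Summable.sum_add_tsum_nat_add 2 hs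
  have hexp : exp a = ∑' n : ℕ, ((n !:ℂ))⁻¹ • a ^ n := by
    rw [exp_eq_tsum ℂ]
  have h2 : exp a - 1 - a = ∑' n : ℕ, (((n+2)! :ℂ))⁻¹ • a ^ (n+2) := by
    rw [hexp, ← hsplit]
    simp [Finset.sum_range_succ, Nat.factorial]
    abel
  rw [h2]
  have hbound : ∀ n : ℕ, ‖(((n+2)! :ℂ))⁻¹ • a ^ (n+2)‖ ≤ ‖a‖^2 * (1/2)^(n+1) := by
    intro n
    rw [norm_smul]
    have h1 : ‖(((n+2)! :ℂ))⁻¹‖ ≤ (1/2)^(n+1) := by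
      rw [norm_inv, Complex.norm_natCast, one_div, inv_pow]
      have hle : ((2:ℝ))^(n+1) ≤ ((n+2)! : ℝ) := by exact_mod_cast two_pow_le_fact n
      exact inv_anti₀ (by positivity) hle
    have h2 : ‖a ^ (n+2)‖ ≤ ‖a‖^2 := by
      calc ‖a ^ (n+2)‖ ≤ ‖a‖^(n+2) := norm_pow_le' a (by omega)
      _ = ‖a‖^2 * ‖a‖^n := by ring
      _ ≤ ‖a‖^2 * 1 := by
            exact mul_le_mul_of_nonneg_left (pow_le_one₀ (norm_nonneg a) ha) (by positivity)
      _ = ‖a‖^2 := mul_one _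
    calc ‖(((n+2)! :ℂ))⁻¹‖ * ‖a ^ (n+2)‖ ≤ (1/2)^(n+1) * ‖a‖^2 :=
          mul_le_mul h1 h2 (norm_nonneg _) (by positivity)
    _ = ‖a‖^2 * (1/2)^(n+1) := mul_comm _ _
  have hsum2 : Summable fun n : ℕ => ‖a‖^2 * ((1:ℝ)/2)^(n+1) := by
    apply Summable.mul_left
    exact (summable_nat_add_iff 1).2 (summable_geometric_of_lt_one (by norm_num) (by norm_num))
  calc ‖∑' n : ℕ, (((n+2)! :ℂ))⁻¹ • a ^ (n+2)‖ ≤ ∑' n : ℕ, ‖(((n+2)! :ℂ))⁻¹ • a ^ (n+2)‖ :=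
        norm_tsum_le_tsum_norm (((summable_nat_add_iff 2).2 hsn))
  _ ≤ ∑' n : ℕ, ‖a‖^2 * ((1:ℝ)/2)^(n+1) := by
        apply Summable.tsum_le_tsum hbound _ hsum2
        exact ((summable_nat_add_iff 2).2 hsn)
  _ = ‖a‖^2 * ∑' n : ℕ, ((1:ℝ)/2)^(n+1) := tsum_mul_left
  _ ≤ ‖a‖^2 * 1 := by
        apply mul_le_mul_of_nonneg_left _ (by positivity)
        have : ∑' n : ℕ, ((1:ℝ)/2)^(n+1) = (1/2) * ∑' n : ℕ, ((1:ℝ)/2)^n := by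
          rw [← tsum_mul_left]; congr 1; ext n; ring
        rw [this, tsum_geometric_of_lt_one (by norm_num) (by norm_num)]
        norm_num
  _ = ‖a‖^2 := mul_one _



lemma conj_alg_identity {A : Type*} [Ring A] (u v a x y E1 E2 : A)
    (hu1 : u = 1 + a + E1) (hv1 : v = 1 - a + E2) :
    u * x * v * y - (x * y + (a * x * y - x * a * y))
      = (u * x * E2 + E1 * x * (1 - a) - a * x * a) * y := by
  subst hu1 hv1; noncomm_ring

/-- Second-order estimate for conjugation by the unitary `u = exp(i h)` with
`h` self-adjoint, `‖h‖ ≤ λ ≤ 1`: for all contractions `x, y`,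
`‖u x u* y − (x y + i (h x y − x h y))‖ ≤ 4λ²`. -/
theorem exp_selfAdjoint_conjugation_estimate
    {A : Type*} [NormedRing A] [StarRing A] [CStarRing A]
    [NormedAlgebra ℂ A] [StarModule ℂ A] [CompleteSpace A]
    (h : A) (hsa : star h = h) (l : ℝ) (hl : ‖h‖ ≤ l) (hl1 : l ≤ 1) :
    ∀ x y : A, ‖x‖ ≤ 1 → ‖y‖ ≤ 1 →
      ‖NormedSpace.exp (Complex.I • h) * x * star (NormedSpace.exp (Complex.I • h)) * y
        - (x * y + Complex.I • (h * x * y - x * h * y))‖ ≤ 4 * l ^ 2 := by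
  intro x y hx hy
  rcases subsingleton_or_nontrivial A with hA | hA
  · have hl0 : (0:ℝ) ≤ l := le_trans (norm_nonneg h) hl
    have : (NormedSpace.exp (Complex.I • h) * x * star (NormedSpace.exp (Complex.I • h)) * y
        - (x * y + Complex.I • (h * x * y - x * h * y))) = 0 := Subsingleton.elim _ _
    rw [this, norm_zero]
    positivity
  set a : A := Complex.I • h with ha_def
  have hna : ‖a‖ = ‖h‖ := by
    rw [ha_def, norm_smul, Complex.norm_I, one_mul]
  have hna1 : ‖a‖ ≤ 1 := by rw [hna]; exact le_trans hl hl1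
  have hl0 : (0:ℝ) ≤ l := le_trans (norm_nonneg h) hl
  set u : A := NormedSpace.exp a with hu_def
  -- star u = exp (-a)
  have hstar_a : star a = -a := by
    rw [ha_def, star_smul, hsa, Complex.star_def, Complex.conj_I, neg_smul]
  have hstar_u : star u = NormedSpace.exp (-a) := by
    rw [hu_def, NormedSpace.star_exp, hstar_a]
  -- u is unitary, so ‖u‖ = 1
  have hmem : a ∈ skewAdjoint A := by
    rw [skewAdjoint.mem_iff, hstar_a]
  have huu : u ∈ unitary A := by
    let +nondep : NormedAlgebra ℚ A := .restrictScalars ℚ ℂ A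
    exact NormedSpace.exp_mem_unitary_of_mem_skewAdjoint hmem
  have hnu : ‖u‖ = 1 := CStarRing.norm_coe_unitary (⟨u, huu⟩ : unitary A)
  -- Taylor remainders
  set E1 : A := u - 1 - a with hE1_def
  set E2 : A := star u - 1 + a with hE2_def
  have hE1 : ‖E1‖ ≤ l ^ 2 := by
    calc ‖E1‖ ≤ ‖a‖ ^ 2 := exp_taylor_two a hna1
    _ ≤ l ^ 2 := by
        apply pow_le_pow_left₀ (norm_nonneg a) _ 2
        rw [hna]; exact hl
  have hE2 : ‖E2‖ ≤ l ^ 2 := by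
    have : E2 = NormedSpace.exp (-a) - 1 - (-a) := by
      rw [hE2_def, hstar_u]; abel
    rw [this]
    calc ‖NormedSpace.exp (-a) - 1 - (-a)‖ ≤ ‖-a‖ ^ 2 :=
          exp_taylor_two (-a) (by rwa [norm_neg])
    _ ≤ l ^ 2 := by
        apply pow_le_pow_left₀ (norm_nonneg _) _ 2
        rw [norm_neg, hna]; exact hl
  -- the smul terms as products with a
  have hsmul : Complex.I • (h * x * y - x * h * y) = a * x * y - x * a * y := by
    rw [smul_sub, ha_def]
    rw [smul_mul_assoc, smul_mul_assoc, mul_smul_comm, smul_mul_assoc]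
  -- key algebraic identity
  have key : u * x * star u * y - (x * y + Complex.I • (h * x * y - x * h * y))
      = (u * x * E2 + E1 * x * (1 - a) - a * x * a) * y := by
    rw [hsmul]
    exact conj_alg_identity u (star u) a x y E1 E2 (by rw [hE1_def]; abel)
      (by rw [hE2_def]; abel)
  rw [key]
  have hterm : ‖u * x * E2 + E1 * x * (1 - a) - a * x * a‖ ≤ 4 * l ^ 2 := by
    have h1 : ‖u * x * E2‖ ≤ l ^ 2 := by
      calc ‖u * x * E2‖ ≤ ‖u * x‖ * ‖E2‖ := norm_mul_le _ _
      _ ≤ (‖u‖ * ‖x‖) * ‖E2‖ := by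
          exact mul_le_mul_of_nonneg_right (norm_mul_le _ _) (norm_nonneg _)
      _ ≤ (1 * 1) * (l ^ 2) := by
          apply mul_le_mul _ hE2 (norm_nonneg _) (by norm_num)
          rw [hnu, one_mul]; exact le_trans hx (by norm_num)
      _ = l ^ 2 := by ring
    have h2 : ‖E1 * x * (1 - a)‖ ≤ 2 * l ^ 2 := by
      calc ‖E1 * x * (1 - a)‖ ≤ ‖E1 * x‖ * ‖1 - a‖ := norm_mul_le _ _
      _ ≤ (‖E1‖ * ‖x‖) * ‖1 - a‖ := by
          exact mul_le_mul_of_nonneg_right (norm_mul_le _ _) (norm_nonneg _)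
      _ ≤ (l ^ 2 * 1) * 2 := by
          apply mul_le_mul (mul_le_mul hE1 hx (norm_nonneg _) (by positivity)) _
            (norm_nonneg _) (by positivity)
          calc ‖1 - a‖ ≤ ‖(1:A)‖ + ‖a‖ := norm_sub_le _ _
          _ ≤ 1 + 1 := add_le_add norm_one.le hna1
          _ = 2 := by norm_num
      _ = 2 * l ^ 2 := by ring
    have h3 : ‖a * x * a‖ ≤ l ^ 2 := by
      calc ‖a * x * a‖ ≤ ‖a * x‖ * ‖a‖ := norm_mul_le _ _
      _ ≤ (‖a‖ * ‖x‖) * ‖a‖ := by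
          exact mul_le_mul_of_nonneg_right (norm_mul_le _ _) (norm_nonneg _)
      _ ≤ (l * 1) * l := by
          apply mul_le_mul (mul_le_mul (hna ▸ hl) hx (norm_nonneg _) hl0) (hna ▸ hl)
            (norm_nonneg _) (by positivity)
      _ = l ^ 2 := by ring
    calc ‖u * x * E2 + E1 * x * (1 - a) - a * x * a‖
        ≤ ‖u * x * E2 + E1 * x * (1 - a)‖ + ‖a * x * a‖ := norm_sub_le _ _
    _ ≤ (‖u * x * E2‖ + ‖E1 * x * (1 - a)‖) + ‖a * x * a‖ :=
        add_le_add_left (norm_add_le _ _) _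
    _ ≤ (l ^ 2 + 2 * l ^ 2) + l ^ 2 := add_le_add (add_le_add h1 h2) h3
    _ = 4 * l ^ 2 := by ring
  calc ‖(u * x * E2 + E1 * x * (1 - a) - a * x * a) * y‖
      ≤ ‖u * x * E2 + E1 * x * (1 - a) - a * x * a‖ * ‖y‖ := norm_mul_le _ _
  _ ≤ (4 * l ^ 2) * 1 := mul_le_mul hterm hy (norm_nonneg _) (by positivity)
  _ = 4 * l ^ 2 := mul_one _
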